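/- The Hopf-Lax function u has the following regularity: u(x,t) is finite for all (x,t) ∈ ℝ^d × [0,∞); u is nondecreasing in x (if x ≤ x' then u(x,t) ≤ u(x',t)); for each fixed x, the map t ↦ u(x,t) is strictly increasing on (0,∞); u is locally Lipschitz on ℝ^d × (0,∞); and u is continuous on ℝ^d × [0,∞), in particular u(x,t) → u_0(x) as t ↓ 0. -/

import Mathlib

open Set Metric Filter

noncomputable section

/-- `g(z) = c·(z₁⋯z_d)^{1/(d+1)}` (used only for `z ≥ 0`, where the product is `≥ 0`). -/
def gfun (c : ℝ) (d : ℕ) (z : Fin d → ℝ) : ℝ := c * (∏ i, z i) ^ (((d : ℝ) + 1)⁻¹)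

/-- The set of values over which the Hopf-Lax supremum is taken. -/
def hlSet (c : ℝ) (d : ℕ) (u0 : (Fin d → ℝ) → ℝ) (x : Fin d → ℝ) (t : ℝ) : Set ℝ :=
  (fun y => u0 y + t * gfun c d (t⁻¹ • (x - y))) '' {y | y ≤ x}

/-- The Hopf-Lax function `u(x,t)`, with `u(x,0) = u₀(x)`. -/
def hlu (c : ℝ) (d : ℕ) (u0 : (Fin d → ℝ) → ℝ) (x : Fin d → ℝ) (t : ℝ) : ℝ :=
  if t = 0 then u0 x else sSup (hlSet c d u0 x t)

/-- The decay condition at `−∞`: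
for every `b`, `lim_{M→∞} sup { |y|_∞^{-d/(d+1)} u₀(y) : y ≤ b, |y|_∞ ≥ M } = −∞`. -/
def DecayCond (d : ℕ) (u0 : (Fin d → ℝ) → ℝ) : Prop :=
  ∀ b : Fin d → ℝ, ∀ C : ℝ, ∃ M : ℝ, 0 < M ∧ ∀ y : Fin d → ℝ, y ≤ b → M ≤ ‖y‖ →
    u0 y ≤ -C * ‖y‖ ^ ((d : ℝ) / ((d : ℝ) + 1))

set_option maxHeartbeats 1000000

namespace HLaux

/-- the auxiliary "phi" function -/
def phi (c : ℝ) (d : ℕ) (u0 : (Fin d → ℝ) → ℝ) (x y : Fin d → ℝ) (t : ℝ) : ℝ :=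
  u0 y + c * (t * ∏ i, (x i - y i)) ^ (((d : ℝ) + 1)⁻¹)

variable {d : ℕ} {c : ℝ} {u0 : (Fin d → ℝ) → ℝ}

lemma al_pos : (0:ℝ) < ((d : ℝ) + 1)⁻¹ := by positivity

lemma al_le_one : ((d : ℝ) + 1)⁻¹ ≤ 1 := by
  rw [inv_le_one_iff₀]; right; linarith [Nat.cast_nonneg (α := ℝ) d]

lemma al_id : (d : ℝ) * ((d : ℝ) + 1)⁻¹ + ((d : ℝ) + 1)⁻¹ = 1 := by
  have h : ((d:ℝ) + 1) ≠ 0 := by positivity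
  field_simp

lemma prod_nonneg_of_le {x y : Fin d → ℝ} (hy : y ≤ x) : 0 ≤ ∏ i, (x i - y i) :=
  Finset.prod_nonneg fun i _ => sub_nonneg.2 (hy i)

lemma tgfun_eq {t : ℝ} (ht : 0 < t) {z : Fin d → ℝ} (hP : 0 ≤ ∏ i, z i) :
    t * gfun c d (t⁻¹ • z) = c * (t * ∏ i, z i) ^ (((d : ℝ) + 1)⁻¹) := by
  set a : ℝ := ((d : ℝ) + 1)⁻¹ with ha
  have ht' : (0:ℝ) ≤ t := ht.le
  have hprod : (∏ i, (t⁻¹ • z) i) = t⁻¹ ^ d * ∏ i, z i := by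
    calc (∏ i, (t⁻¹ • z) i) = ∏ i, t⁻¹ * z i := by
          refine Finset.prod_congr rfl fun i _ => ?_; simp
      _ = (∏ _i : Fin d, t⁻¹) * ∏ i, z i := Finset.prod_mul_distrib
      _ = t⁻¹ ^ d * ∏ i, z i := by simp
  have h1 : (t⁻¹ ^ d * ∏ i, z i) ^ a = (t⁻¹)^((d:ℝ) * a) * (∏ i, z i) ^ a := by
    rw [Real.mul_rpow (by positivity) hP, ← Real.rpow_natCast t⁻¹ d,
      ← Real.rpow_mul (by positivity)]
  have h2 : t * (t⁻¹) ^ ((d:ℝ) * a) = t ^ a := by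
    rw [Real.inv_rpow ht']
    have h3 : t ^ a * t ^ ((d:ℝ)*a) = t := by
      rw [← Real.rpow_add ht, show a + ((d:ℝ)*a) = 1 from by rw [add_comm]; exact al_id,
        Real.rpow_one]
    have hne : t ^ ((d:ℝ)*a) ≠ 0 := by positivity
    rw [mul_inv_eq_iff_eq_mul₀ hne]
    exact h3.symm
  calc t * gfun c d (t⁻¹ • z) = t * (c * ((t⁻¹ ^ d * ∏ i, z i) ^ a)) := by
        rw [gfun, hprod]
    _ = c * ((t * (t⁻¹)^((d:ℝ)*a)) * (∏ i, z i) ^ a) := by rw [h1]; ring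
    _ = c * (t ^ a * (∏ i, z i) ^ a) := by rw [h2]
    _ = c * (t * ∏ i, z i) ^ a := by rw [← Real.mul_rpow ht' hP]


lemma hlSet_eq {x : Fin d → ℝ} {t : ℝ} (ht : 0 < t) :
    hlSet c d u0 x t = (fun y => phi c d u0 x y t) '' {y | y ≤ x} := by
  unfold hlSet phi
  refine Set.image_congr fun y hy => ?_
  have hP : 0 ≤ ∏ i, (x i - y i) := prod_nonneg_of_le hy
  have := tgfun_eq (c := c) ht (z := x - y) (by simpa using hP)
  simp only [Pi.sub_apply] at this ⊢
  rw [this]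

lemma phi_mem {x y : Fin d → ℝ} {t : ℝ} (ht : 0 < t) (hy : y ≤ x) :
    phi c d u0 x y t ∈ hlSet c d u0 x t := by
  rw [hlSet_eq ht]; exact ⟨y, hy, rfl⟩

lemma phi_self (hd : 1 ≤ d) (x : Fin d → ℝ) (t : ℝ) : phi c d u0 x x t = u0 x := by
  have h0 : (∏ i, (x i - x i)) = 0 :=
    Finset.prod_eq_zero (Finset.mem_univ (⟨0, hd⟩ : Fin d)) (by ring)
  rw [phi, h0, mul_zero, Real.zero_rpow (ne_of_gt al_pos), mul_zero, add_zero]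

lemma u0_mem (hd : 1 ≤ d) {x : Fin d → ℝ} {t : ℝ} (ht : 0 < t) :
    u0 x ∈ hlSet c d u0 x t := by
  have := phi_mem (c := c) (u0 := u0) ht (le_refl x)
  rwa [phi_self hd] at this

lemma prod_le_pow {x y : Fin d → ℝ} (hy : y ≤ x) : (∏ i, (x i - y i)) ≤ ‖x - y‖ ^ d := by
  calc (∏ i, (x i - y i)) ≤ ∏ _i : Fin d, ‖x - y‖ := by
        refine Finset.prod_le_prod (fun i _ => sub_nonneg.2 (hy i)) (fun i _ => ?_)
        calc x i - y i ≤ |x i - y i| := le_abs_self _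
          _ = ‖(x - y) i‖ := by simp [Real.norm_eq_abs]
          _ ≤ ‖x - y‖ := norm_le_pi_norm _ i
    _ = ‖x - y‖ ^ d := by simp

lemma phi_le (hc : 0 < c) {x y : Fin d → ℝ} {t : ℝ} (ht : 0 ≤ t) (hy : y ≤ x) {B : ℝ}
    (hB : ‖x - y‖ ≤ B) :
    phi c d u0 x y t ≤ u0 y + c * (t * B ^ d) ^ (((d : ℝ) + 1)⁻¹) := by
  have hB0 : 0 ≤ B := le_trans (norm_nonneg _) hB
  refine add_le_add le_rfl (mul_le_mul_of_nonneg_left ?_ hc.le)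
  refine Real.rpow_le_rpow (mul_nonneg ht (prod_nonneg_of_le hy)) ?_ al_pos.le
  exact mul_le_mul_of_nonneg_left ((prod_le_pow hy).trans (pow_le_pow_left₀ (norm_nonneg _) hB d)) ht


lemma far_bound (hd : 1 ≤ d) (hc : 0 < c) (hdecay : DecayCond d u0) (x₀ : Fin d → ℝ)
    {ρ T₁ : ℝ} (hρ : 0 < ρ) (hT : 0 < T₁) (m : ℝ) :
    ∃ R, 0 < R ∧ ∀ x, ‖x - x₀‖ ≤ ρ → ∀ t, 0 < t → t ≤ T₁ → ∀ y, y ≤ x → R ≤ ‖y‖ →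
      phi c d u0 x y t ≤ m := by
  set a : ℝ := ((d:ℝ)+1)⁻¹ with ha
  set E : ℝ := (d:ℝ)/((d:ℝ)+1) with hE
  have hEa : E = (d:ℝ) * a := div_eq_mul_inv _ _
  have hE0 : 0 ≤ E := by positivity
  obtain ⟨M, hM, hdec⟩ := hdecay (fun i => x₀ i + ρ) (c * (T₁ * 2^d) ^ a + 1)
  set R : ℝ := max M (max (‖x₀‖ + ρ) ((1+|m|) ^ ((d:ℝ)+1))) with hR
  refine ⟨R, lt_of_lt_of_le hM (le_max_left _ _), ?_⟩
  intro x hx t ht htT y hy hRy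
  have hyM : M ≤ ‖y‖ := le_trans (le_max_left _ _) hRy
  have hyb : y ≤ fun i => x₀ i + ρ := by
    intro i
    have h1 : ‖(x - x₀) i‖ ≤ ‖x - x₀‖ := norm_le_pi_norm _ i
    have h2 : |x i - x₀ i| ≤ ρ := by
      simpa [Real.norm_eq_abs] using h1.trans hx
    have := (abs_le.1 h2).2
    have := hy i
    simp only []
    linarith
  have hu0y := hdec y hyb hyM
  have hxn : ‖x‖ ≤ ‖x₀‖ + ρ := by
    have h := norm_sub_norm_le x x₀
    linarith [h.trans hx]
  have hyR : ‖x₀‖ + ρ ≤ ‖y‖ := le_trans ((le_max_left _ _).trans (le_max_right M _)) hRy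
  have hxy : ‖x - y‖ ≤ 2 * ‖y‖ := by
    have := norm_sub_le x y; linarith
  have h1 : phi c d u0 x y t ≤ u0 y + c * (T₁ * (2*‖y‖)^d) ^ a := by
    refine (phi_le hc ht.le hy hxy).trans
      (add_le_add le_rfl (mul_le_mul_of_nonneg_left
        (Real.rpow_le_rpow (by positivity)
          (mul_le_mul_of_nonneg_right htT (by positivity)) al_pos.le) hc.le))
  have h2 : c * (T₁ * (2*‖y‖)^d) ^ a = (c * (T₁ * 2^d) ^ a) * ‖y‖ ^ E := by
    rw [mul_pow, show T₁ * (2^d * ‖y‖^d) = (T₁ * 2^d) * ‖y‖^d by ring,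
      Real.mul_rpow (by positivity) (by positivity),
      ← Real.rpow_natCast ‖y‖ d, ← Real.rpow_mul (norm_nonneg _), ← hEa]
    ring
  have hyE : 0 ≤ ‖y‖ ^ E := Real.rpow_nonneg (norm_nonneg _) _
  have hfinal : phi c d u0 x y t ≤ -(‖y‖ ^ E) := by
    rw [h2] at h1
    have : u0 y ≤ -(c * (T₁ * 2^d) ^ a + 1) * ‖y‖ ^ E := hu0y
    nlinarith
  have hbase : (1:ℝ) ≤ 1 + |m| := by linarith [abs_nonneg m]
  have h3 : ((1+|m|) ^ ((d:ℝ)+1)) ^ E ≤ ‖y‖ ^ E :=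
    Real.rpow_le_rpow (by positivity)
      (le_trans ((le_max_right _ _).trans (le_max_right M _)) hRy) hE0
  have h4 : ((1+|m|) ^ ((d:ℝ)+1)) ^ E = (1+|m|) ^ ((d:ℝ)) := by
    rw [← Real.rpow_mul (by positivity)]
    congr 1
    rw [hE]; field_simp
  have h5 : (1:ℝ) + |m| ≤ (1+|m|) ^ ((d:ℝ)) := by
    calc (1:ℝ)+|m| = (1+|m|) ^ ((1:ℝ)) := (Real.rpow_one _).symm
      _ ≤ _ := Real.rpow_le_rpow_of_exponent_le hbase (by exact_mod_cast hd)
  have h6 : -(‖y‖ ^ E) ≤ m := by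
    rw [h4] at h3
    have := neg_abs_le m
    linarith
  exact hfinal.trans h6


lemma hl_bdd (hd : 1 ≤ d) (hc : 0 < c) (hmono : Monotone u0) (hdecay : DecayCond d u0)
    (x : Fin d → ℝ) {t : ℝ} (ht : 0 < t) : BddAbove (hlSet c d u0 x t) := by
  obtain ⟨R, hR, hfar⟩ := far_bound hd hc hdecay x one_pos ht (u0 x)
  refine ⟨u0 x + c * (t * (‖x‖ + R)^d) ^ (((d:ℝ)+1)⁻¹), ?_⟩
  rw [hlSet_eq ht]
  rintro v ⟨y, hy, rfl⟩
  by_cases hcase : R ≤ ‖y‖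
  · exact (hfar x (by simp) t ht le_rfl y hy hcase).trans
      (le_add_of_nonneg_right (by positivity))
  · push_neg at hcase
    have hB : ‖x - y‖ ≤ ‖x‖ + R := by
      have := norm_sub_le x y; linarith
    exact (phi_le hc ht.le hy hB).trans (add_le_add_left (hmono hy) _)

lemma hl_nonempty (hd : 1 ≤ d) {x : Fin d → ℝ} {t : ℝ} (ht : 0 < t) :
    (hlSet c d u0 x t).Nonempty := ⟨u0 x, u0_mem hd ht⟩

lemma hlu_eq {x : Fin d → ℝ} {t : ℝ} (ht : 0 < t) :
    hlu c d u0 x t = sSup (hlSet c d u0 x t) := if_neg (ne_of_gt ht)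

lemma phi_le_hlu (hd : 1 ≤ d) (hc : 0 < c) (hmono : Monotone u0) (hdecay : DecayCond d u0)
    {x y : Fin d → ℝ} {t : ℝ} (ht : 0 < t) (hy : y ≤ x) :
    phi c d u0 x y t ≤ hlu c d u0 x t := by
  rw [hlu_eq ht]
  exact le_csSup (hl_bdd hd hc hmono hdecay x ht) (phi_mem ht hy)

lemma le_hlu (hd : 1 ≤ d) (hc : 0 < c) (hmono : Monotone u0) (hdecay : DecayCond d u0)
    {x : Fin d → ℝ} {t : ℝ} (ht : 0 < t) : u0 x ≤ hlu c d u0 x t := by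
  have := phi_le_hlu hd hc hmono hdecay ht (le_refl x)
  rwa [phi_self hd] at this

lemma upper_near (hd : 1 ≤ d) (hc : 0 < c) (hmono : Monotone u0) (hdecay : DecayCond d u0)
    (x₀ : Fin d → ℝ) {T₁ : ℝ} (hT : 0 < T₁) :
    ∃ D, 0 < D ∧ ∀ x, ‖x - x₀‖ ≤ 1 → ∀ t, 0 < t → t ≤ T₁ →
      hlu c d u0 x t ≤ u0 x + c * (t * D) ^ (((d:ℝ)+1)⁻¹) := by
  obtain ⟨R, hR, hfar⟩ := far_bound hd hc hdecay x₀ one_pos hT (u0 (x₀ - fun _ => 1))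
  refine ⟨(‖x₀‖ + 1 + R)^d, by positivity, fun x hx t ht htT => ?_⟩
  have hxm : (x₀ - fun _ => (1:ℝ)) ≤ x := by
    intro i
    have h1 : ‖(x - x₀) i‖ ≤ ‖x - x₀‖ := norm_le_pi_norm _ i
    have h2 : |x i - x₀ i| ≤ 1 := by simpa [Real.norm_eq_abs] using h1.trans hx
    have := (abs_le.1 h2).1
    simp only [Pi.sub_apply]
    linarith
  rw [hlu_eq ht, hlSet_eq ht]
  refine csSup_le ⟨_, ⟨x, le_refl x, rfl⟩⟩ ?_
  rintro v ⟨y, hy, rfl⟩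
  by_cases hcase : R ≤ ‖y‖
  · have h := hfar x hx t ht htT y hy hcase
    have h2 : u0 (x₀ - fun _ => (1:ℝ)) ≤ u0 x := hmono hxm
    have h3 : (0:ℝ) ≤ c * (t * (‖x₀‖ + 1 + R)^d) ^ (((d:ℝ)+1)⁻¹) := by positivity
    linarith
  · push_neg at hcase
    have hxn : ‖x‖ ≤ ‖x₀‖ + 1 := by
      have := norm_sub_norm_le x x₀; linarith
    have hB : ‖x - y‖ ≤ ‖x₀‖ + 1 + R := by
      have := norm_sub_le x y; linarith
    exact (phi_le hc ht.le hy hB).trans (add_le_add_left (hmono hy) _)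

lemma hlu_mono_x (hd : 1 ≤ d) (hc : 0 < c) (hmono : Monotone u0) (hdecay : DecayCond d u0)
    {t : ℝ} (ht : 0 ≤ t) {x x' : Fin d → ℝ} (hxx : x ≤ x') :
    hlu c d u0 x t ≤ hlu c d u0 x' t := by
  rcases eq_or_lt_of_le ht with h0 | h0
  · rw [hlu, hlu, if_pos h0.symm, if_pos h0.symm]
    exact hmono hxx
  · rw [hlu_eq h0, hlSet_eq h0]
    refine csSup_le ⟨_, ⟨x, le_refl x, rfl⟩⟩ ?_
    rintro v ⟨y, hy, rfl⟩
    set y' := y + (x' - x) with hy'def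
    have hy' : y' ≤ x' := fun i => by
      simp only [hy'def, Pi.add_apply, Pi.sub_apply]
      linarith [hy i]
    have hyy : y ≤ y' := fun i => by
      simp only [hy'def, Pi.add_apply, Pi.sub_apply]
      linarith [hxx i]
    have hphi : phi c d u0 x y t ≤ phi c d u0 x' y' t := by
      refine add_le_add (hmono hyy) ?_
      rw [show (∏ i, (x' i - y' i)) = ∏ i, (x i - y i) from
        Finset.prod_congr rfl fun i _ => by simp only [hy'def, Pi.add_apply, Pi.sub_apply]; ring]
    exact hphi.trans (phi_le_hlu hd hc hmono hdecay h0 hy')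

lemma hlu_mono_t (hd : 1 ≤ d) (hc : 0 < c) (hmono : Monotone u0) (hdecay : DecayCond d u0)
    (x : Fin d → ℝ) {s t : ℝ} (hs : 0 < s) (hst : s ≤ t) :
    hlu c d u0 x s ≤ hlu c d u0 x t := by
  have ht : 0 < t := hs.trans_le hst
  rw [hlu_eq hs, hlSet_eq hs]
  refine csSup_le ⟨_, ⟨x, le_refl x, rfl⟩⟩ ?_
  rintro v ⟨y, hy, rfl⟩
  have hP : 0 ≤ ∏ i, (x i - y i) := prod_nonneg_of_le hy
  have hphi : phi c d u0 x y s ≤ phi c d u0 x y t := by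
    refine add_le_add le_rfl (mul_le_mul_of_nonneg_left
      (Real.rpow_le_rpow (mul_nonneg hs.le hP)
        (mul_le_mul_of_nonneg_right hst hP) al_pos.le) hc.le)
  exact hphi.trans (phi_le_hlu hd hc hmono hdecay ht hy)


lemma rpow_diff_le {a s s' p : ℝ} (ha : 0 < a) (h1 : a ≤ s) (h2 : s ≤ s')
    (hp0 : 0 < p) (hp1 : p ≤ 1) :
    s' ^ p - s ^ p ≤ p * a ^ (p - 1) * (s' - s) := by
  rcases eq_or_lt_of_le h2 with rfl | hlt
  · simp
  · have hs0 : 0 < s := ha.trans_le h1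
    obtain ⟨ξ, hξ, hslope⟩ := exists_hasDerivAt_eq_slope (fun r => r ^ p)
      (fun r => p * r ^ (p-1)) hlt
      (fun r hr => (Real.continuousAt_rpow_const r p
        (Or.inl (ne_of_gt (hs0.trans_le hr.1)))).continuousWithinAt)
      (fun r hr => Real.hasDerivAt_rpow_const (Or.inl (ne_of_gt (hs0.trans hr.1))))
    have hξa : a ≤ ξ := h1.trans (le_of_lt hξ.1)
    have hbound : ξ ^ (p-1) ≤ a ^ (p-1) :=
      Real.rpow_le_rpow_of_nonpos ha hξa (by linarith)
    have hpos : 0 < s' - s := by linarith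
    rw [eq_div_iff (ne_of_gt hpos)] at hslope
    have hξ0 : 0 < ξ := hs0.trans hξ.1
    have hξp : 0 ≤ ξ ^ (p-1) := Real.rpow_nonneg hξ0.le _
    nlinarith [mul_le_mul_of_nonneg_right (mul_le_mul_of_nonneg_left hbound hp0.le) hpos.le]

lemma lip_const_of_compact {f : (Fin d → ℝ) → ℝ} (hf : LocallyLipschitz f)
    {s : Set (Fin d → ℝ)} (hs : IsCompact s) :
    ∃ K : ℝ, 0 ≤ K ∧ ∀ a ∈ s, ∀ b ∈ s, |f a - f b| ≤ K * dist a b := by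
  rcases s.eq_empty_or_nonempty with rfl | hsne
  · exact ⟨0, le_rfl, by simp⟩
  obtain ⟨B, hB⟩ := hs.exists_bound_of_continuousOn hf.continuous.continuousOn
  choose Kf Tf hTf hLf using hf
  have hrad : ∀ x, ∃ r, 0 < r ∧ ball x (2*r) ⊆ Tf x := by
    intro x
    obtain ⟨ε, hε, hb⟩ := Metric.mem_nhds_iff.1 (hTf x)
    refine ⟨ε/2, by linarith, fun z hz => hb ?_⟩
    rw [mem_ball] at *
    linarith
  choose r hr hball using hrad
  obtain ⟨F, hFs, hcov⟩ := hs.elim_nhds_subcover (fun x => ball x (r x))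
    (fun x _ => ball_mem_nhds x (hr x))
  have hFne : F.Nonempty := by
    obtain ⟨z, hz⟩ := hsne
    obtain ⟨i, hi, _⟩ := by simpa using hcov hz
    exact ⟨i, hi⟩
  have hB0 : (0:ℝ) ≤ B := le_trans (norm_nonneg _) (hB _ hsne.choose_spec)
  set δ := F.inf' hFne r with hδ
  have hδ0 : 0 < δ := (Finset.lt_inf'_iff hFne).2 fun i _ => hr i
  set KK := F.sup' hFne (fun x => ((Kf x : ℝ))) with hKK
  refine ⟨max KK (2*B/δ), le_trans (by positivity) (le_max_right _ _), ?_⟩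
  intro a ha b hb
  rcases lt_or_ge (dist a b) δ with hab | hab
  · obtain ⟨i, hiF, hai⟩ : ∃ i ∈ F, a ∈ ball i (r i) := by simpa using hcov ha
    have hδi : δ ≤ r i := Finset.inf'_le _ hiF
    have hai2 : a ∈ ball i (2 * r i) :=
      mem_ball.2 (lt_of_lt_of_le (mem_ball.1 hai) (by linarith [hr i]))
    have hbi : b ∈ ball i (2 * r i) := by
      rw [mem_ball] at hai ⊢
      calc dist b i ≤ dist b a + dist a i := dist_triangle _ _ _
        _ < δ + r i := by rw [dist_comm b a]; linarith
        _ ≤ 2 * r i := by linarith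
    have hlp := (hLf i).dist_le_mul a (hball i hai2) b (hball i hbi)
    rw [Real.dist_eq] at hlp
    refine hlp.trans (mul_le_mul_of_nonneg_right ?_ dist_nonneg)
    exact le_trans (Finset.le_sup' (fun x => ((Kf x : ℝ))) hiF) (le_max_left _ _)
  · have h1 : |f a - f b| ≤ 2 * B := by
      have ha' := hB a ha
      have hb' := hB b hb
      rw [Real.norm_eq_abs] at ha' hb'
      have := abs_sub_abs_le_abs_sub (f a) (f b)
      have habs : |f a - f b| ≤ |f a| + |f b| := by
        have := abs_add_le (f a) (-(f b))
        simpa [sub_eq_add_neg] using this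
      linarith
    calc |f a - f b| ≤ 2*B := h1
      _ = (2*B/δ)*δ := by field_simp
      _ ≤ (2*B/δ) * dist a b := mul_le_mul_of_nonneg_left hab (by positivity)
      _ ≤ max KK (2*B/δ) * dist a b :=
          mul_le_mul_of_nonneg_right (le_max_right _ _) dist_nonneg


lemma lip_x (hd : 1 ≤ d) (hc : 0 < c) (hmono : Monotone u0) (hlip : LocallyLipschitz u0)
    (hdecay : DecayCond d u0) (x₀ : Fin d → ℝ) {t₁ T₁ : ℝ} (ht₁ : 0 < t₁) (hT : t₁ ≤ T₁) :
    ∃ K, 0 ≤ K ∧ ∀ x x', ‖x - x₀‖ ≤ 1 → ‖x' - x₀‖ ≤ 1 → ∀ t, t₁ ≤ t → t ≤ T₁ →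
      hlu c d u0 x' t ≤ hlu c d u0 x t + K * ‖x' - x‖ := by
  haveI : Nonempty (Fin d) := Fin.pos_iff_nonempty.1 hd
  obtain ⟨R, hR, hfar⟩ := far_bound hd hc hdecay x₀ (ρ := 3) (by norm_num)
    (ht₁.trans_le hT) (u0 (x₀ - fun _ => 1))
  obtain ⟨K, hK0, hKlip⟩ := lip_const_of_compact hlip
    (isCompact_closedBall (0 : Fin d → ℝ) (R + 4))
  refine ⟨K, hK0, ?_⟩
  intro x x' hx hx' t ht htT
  have ht0 : 0 < t := ht₁.trans_le ht
  set h := ‖x' - x‖ with hh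
  have hh0 : 0 ≤ h := norm_nonneg _
  have hconst : ‖(fun _ : Fin d => h)‖ = h := by
    rw [pi_norm_const, Real.norm_eq_abs, abs_of_nonneg hh0]
  have hh2 : h ≤ 2 := by
    have hrw : x' - x = (x' - x₀) - (x - x₀) := by abel
    rw [hh, hrw]
    have := norm_sub_le (x' - x₀) (x - x₀)
    linarith
  set xh := x + (fun _ => h) with hxh
  have hx'le : x' ≤ xh := by
    intro i
    have h1 : ‖(x' - x) i‖ ≤ h := norm_le_pi_norm _ i
    have h2 := (abs_le.1 (by simpa [Real.norm_eq_abs] using h1)).2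
    simp only [hxh, Pi.add_apply, Pi.sub_apply] at h2 ⊢
    linarith
  have step1 : hlu c d u0 x' t ≤ hlu c d u0 xh t :=
    hlu_mono_x hd hc hmono hdecay ht0.le hx'le
  have hxhx₀ : ‖xh - x₀‖ ≤ 3 := by
    have hrw : xh - x₀ = (x - x₀) + (fun _ => h) := by
      funext i; simp [hxh]; ring
    rw [hrw]
    have := norm_add_le (x - x₀) (fun _ : Fin d => h)
    rw [hconst] at this
    linarith
  have hxm : (x₀ - fun _ => (1:ℝ)) ≤ x := by
    intro i
    have h1 : ‖(x - x₀) i‖ ≤ ‖x - x₀‖ := norm_le_pi_norm _ i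
    have h2 := (abs_le.1 (by simpa [Real.norm_eq_abs] using h1.trans hx)).1
    simp only [Pi.sub_apply]
    linarith
  have step2 : hlu c d u0 xh t ≤ hlu c d u0 x t + K * h := by
    rw [hlu_eq ht0, hlSet_eq ht0]
    refine csSup_le ⟨_, ⟨xh, le_refl xh, rfl⟩⟩ ?_
    rintro v ⟨y, hy, rfl⟩
    by_cases hcase : R ≤ ‖y‖
    · have hfb := hfar xh hxhx₀ t ht0 htT y hy hcase
      have hm : u0 (x₀ - fun _ => (1:ℝ)) ≤ u0 x := hmono hxm
      have hx1 := le_hlu hd hc hmono hdecay (x := x) ht0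
      have : 0 ≤ K * h := mul_nonneg hK0 hh0
      linarith
    · push_neg at hcase
      set y' := y - (fun _ => h) with hy'def
      have hy'x : y' ≤ x := by
        intro i
        have := hy i
        simp only [hxh, Pi.add_apply] at this
        simp only [hy'def, Pi.sub_apply]
        linarith
      have hprod : (∏ i, (xh i - y i)) = ∏ i, (x i - y' i) :=
        Finset.prod_congr rfl fun i _ => by
          simp only [hxh, hy'def, Pi.add_apply, Pi.sub_apply]; ring
      have hyball : y ∈ closedBall (0 : Fin d → ℝ) (R+4) := by
        rw [mem_closedBall, dist_zero_right]
        linarith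
      have hy'ball : y' ∈ closedBall (0 : Fin d → ℝ) (R+4) := by
        rw [mem_closedBall, dist_zero_right]
        have := norm_sub_le y (fun _ : Fin d => h)
        rw [hconst] at this
        rw [hy'def]
        linarith
      have hdist : dist y y' = h := by
        rw [dist_eq_norm, hy'def, show y - (y - fun _ => h) = (fun _ : Fin d => h) from by
          funext i; simp]
        exact hconst
      have hKd := hKlip y hyball y' hy'ball
      rw [hdist] at hKd
      have hu0d : u0 y - u0 y' ≤ K * h := (le_abs_self _).trans hKd
      have hphi : phi c d u0 xh y t ≤ phi c d u0 x y' t + K * h := by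
        rw [phi, phi, hprod]
        linarith
      exact hphi.trans (add_le_add_left (phi_le_hlu hd hc hmono hdecay ht0 hy'x) _)
  calc hlu c d u0 x' t ≤ hlu c d u0 xh t := step1
    _ ≤ hlu c d u0 x t + K * ‖x' - x‖ := step2

lemma lip_t (hd : 1 ≤ d) (hc : 0 < c) (hmono : Monotone u0) (hdecay : DecayCond d u0)
    (x₀ : Fin d → ℝ) {t₁ T₁ : ℝ} (ht₁ : 0 < t₁) (hT : t₁ ≤ T₁) :
    ∃ K, 0 ≤ K ∧ ∀ x, ‖x - x₀‖ ≤ 1 → ∀ t t', t₁ ≤ t → t ≤ t' → t' ≤ T₁ →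
      hlu c d u0 x t' ≤ hlu c d u0 x t + K * (t' - t) := by
  obtain ⟨R, hR, hfar⟩ := far_bound hd hc hdecay x₀ (ρ := 1) one_pos
    (ht₁.trans_le hT) (u0 (x₀ - fun _ => 1))
  set a : ℝ := ((d:ℝ)+1)⁻¹ with ha
  set P₀ : ℝ := (‖x₀‖ + 1 + R)^d with hP₀
  have hP₀0 : 0 ≤ P₀ := by positivity
  refine ⟨c * P₀ ^ a * (a * t₁ ^ (a - 1)), by positivity, ?_⟩
  intro x hx t t' ht htt' ht'T
  have ht0 : 0 < t := ht₁.trans_le ht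
  have ht'0 : 0 < t' := ht0.trans_le htt'
  have hxm : (x₀ - fun _ => (1:ℝ)) ≤ x := by
    intro i
    have h1 : ‖(x - x₀) i‖ ≤ ‖x - x₀‖ := norm_le_pi_norm _ i
    have h2 := (abs_le.1 (by simpa [Real.norm_eq_abs] using h1.trans hx)).1
    simp only [Pi.sub_apply]
    linarith
  rw [hlu_eq ht'0, hlSet_eq ht'0]
  refine csSup_le ⟨_, ⟨x, le_refl x, rfl⟩⟩ ?_
  rintro v ⟨y, hy, rfl⟩
  have hKnn : (0:ℝ) ≤ c * P₀ ^ a * (a * t₁ ^ (a-1)) := by positivity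
  have htt0 : 0 ≤ t' - t := by linarith
  by_cases hcase : R ≤ ‖y‖
  · have hfb := hfar x hx t' ht'0 ht'T y hy hcase
    have hm : u0 (x₀ - fun _ => (1:ℝ)) ≤ u0 x := hmono hxm
    have hx1 := le_hlu hd hc hmono hdecay (x := x) ht0
    nlinarith
  · push_neg at hcase
    set P := ∏ i, (x i - y i) with hP
    have hPnn : 0 ≤ P := prod_nonneg_of_le hy
    have hxn : ‖x‖ ≤ ‖x₀‖ + 1 := by
      have := norm_sub_norm_le x x₀; linarith
    have hxy : ‖x - y‖ ≤ ‖x₀‖ + 1 + R := by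
      have := norm_sub_le x y; linarith
    have hPP₀ : P ≤ P₀ := (prod_le_pow hy).trans
      (pow_le_pow_left₀ (norm_nonneg _) hxy d)
    have key : phi c d u0 x y t' ≤ phi c d u0 x y t
        + c * P₀ ^ a * (a * t₁ ^ (a-1)) * (t' - t) := by
      rw [phi, phi, ← hP, Real.mul_rpow ht'0.le hPnn, Real.mul_rpow ht0.le hPnn]
      have hdiff : t'^a - t^a ≤ a * t₁^(a-1) * (t'-t) :=
        rpow_diff_le ht₁ ht htt' al_pos al_le_one
      have hPa : P^a ≤ P₀^a := Real.rpow_le_rpow hPnn hPP₀ al_pos.le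
      have hPa0 : 0 ≤ P^a := Real.rpow_nonneg hPnn _
      have hta : t^a ≤ t'^a := Real.rpow_le_rpow ht0.le htt' al_pos.le
      have hq0 : 0 ≤ a * t₁^(a-1) * (t'-t) := by positivity
      nlinarith [mul_le_mul_of_nonneg_left hdiff (mul_nonneg hc.le hPa0),
        mul_le_mul_of_nonneg_right hPa (mul_nonneg hc.le hq0)]
    exact key.trans (add_le_add_left (phi_le_hlu hd hc hmono hdecay ht0 hy) _)

end HLaux

open HLaux

/-- Regularity of the Hopf-Lax function `u`: the supremum defining `u(x,t)` is finite
(the set is nonempty and bounded above); `u` is nondecreasing in `x`; strictly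
increasing in `t` on `(0,∞)`; locally Lipschitz on `ℝ^d × (0,∞)`; continuous on
`ℝ^d × [0,∞)`; and `u(x,t) → u₀(x)` as `t ↓ 0`. -/
theorem hlu_regularity
    (d : ℕ) (hd : 1 ≤ d) (c : ℝ) (hc : 0 < c)
    (u0 : (Fin d → ℝ) → ℝ) (hmono : Monotone u0) (hlip : LocallyLipschitz u0)
    (hdecay : DecayCond d u0) :
    -- finiteness of the supremum
    (∀ (x : Fin d → ℝ) (t : ℝ), 0 < t →
        (hlSet c d u0 x t).Nonempty ∧ BddAbove (hlSet c d u0 x t)) ∧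
    -- nondecreasing in x
    (∀ (t : ℝ), 0 ≤ t → ∀ x x' : Fin d → ℝ, x ≤ x' → hlu c d u0 x t ≤ hlu c d u0 x' t) ∧
    -- strictly increasing in t on (0,∞)
    (∀ (x : Fin d → ℝ) (s t : ℝ), 0 < s → s < t → hlu c d u0 x s < hlu c d u0 x t) ∧
    -- locally Lipschitz on ℝ^d × (0,∞)
    (∀ p : (Fin d → ℝ) × ℝ, 0 < p.2 → ∃ ε > 0, ∃ L : NNReal,
        LipschitzOnWith L (fun q : (Fin d → ℝ) × ℝ => hlu c d u0 q.1 q.2)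
          (Metric.ball p ε ∩ {q : (Fin d → ℝ) × ℝ | 0 < q.2})) ∧
    -- continuous on ℝ^d × [0,∞)
    ContinuousOn (fun q : (Fin d → ℝ) × ℝ => hlu c d u0 q.1 q.2)
      {q : (Fin d → ℝ) × ℝ | 0 ≤ q.2} ∧
    -- u(x,t) → u₀(x) as t ↓ 0
    (∀ x : Fin d → ℝ,
        Tendsto (fun t => hlu c d u0 x t) (nhdsWithin 0 (Set.Ioi 0)) (nhds (u0 x))) := by
  haveI : Nonempty (Fin d) := Fin.pos_iff_nonempty.1 hd
  set a : ℝ := ((d:ℝ)+1)⁻¹ with ha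
  have ha0 : 0 < a := al_pos
  have part1 : ∀ (x : Fin d → ℝ) (t : ℝ), 0 < t →
      (hlSet c d u0 x t).Nonempty ∧ BddAbove (hlSet c d u0 x t) :=
    fun x t ht => ⟨hl_nonempty hd ht, hl_bdd hd hc hmono hdecay x ht⟩
  have part2 : ∀ (t : ℝ), 0 ≤ t → ∀ x x' : Fin d → ℝ, x ≤ x' →
      hlu c d u0 x t ≤ hlu c d u0 x' t :=
    fun t ht x x' h => hlu_mono_x hd hc hmono hdecay ht h
  have part3 : ∀ (x : Fin d → ℝ) (s t : ℝ), 0 < s → s < t →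
      hlu c d u0 x s < hlu c d u0 x t := by
    intro x s t hs hst
    have ht : 0 < t := hs.trans hst
    have hsa : s ^ a < t ^ a := Real.rpow_lt_rpow hs.le hst ha0
    have hgap0 : u0 x ≤ hlu c d u0 x s := le_hlu hd hc hmono hdecay hs
    rcases eq_or_lt_of_le hgap0 with heq | hgap
    · -- u(x,s) = u0 x : use the shift x - r·𝟙
      obtain ⟨K, T, hT, hK⟩ := hlip x
      obtain ⟨ρ, hρ, hball⟩ := Metric.mem_nhds_iff.1 hT
      set A : ℝ := (c * t^a / ((K:ℝ)+1) / 2) ^ ((d:ℝ)+1) with hA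
      have hta : 0 < t ^ a := Real.rpow_pos_of_pos ht _
      have hA0 : 0 < A := by positivity
      set r : ℝ := min (ρ/2) (min 1 A) with hrdef
      have hr0 : 0 < r := lt_min (by linarith) (lt_min one_pos hA0)
      have hrρ : r < ρ := lt_of_le_of_lt (min_le_left _ _) (by linarith)
      have hrA : r ≤ A := le_trans (min_le_right _ _) (min_le_right _ _)
      set y := x - (fun _ => r) with hydef
      have hprod : (∏ i, (x i - y i)) = r ^ d := by
        rw [Finset.prod_congr rfl (fun i _ => show x i - y i = r by
          simp [hydef])]
        simp
      have hyx : y ≤ x := fun i => by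
        simp only [hydef, Pi.sub_apply]
        linarith
      have hphi : phi c d u0 x y t = u0 y + c * (t^a * r^((d:ℝ)*a)) := by
        rw [phi, hprod, Real.mul_rpow ht.le (by positivity),
          ← Real.rpow_natCast r d, ← Real.rpow_mul hr0.le]
      have hyball : y ∈ ball x ρ := by
        rw [mem_ball, dist_eq_norm, show y - x = -(fun _ : Fin d => r) from by
          funext i; simp [hydef]]
        rw [norm_neg, pi_norm_const, Real.norm_eq_abs, abs_of_nonneg hr0.le]
        exact hrρ
      have hKd := hK.dist_le_mul y (hball hyball) x (hball (mem_ball_self hρ))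
      have hdyx : dist y x = r := by
        rw [dist_eq_norm, show y - x = -(fun _ : Fin d => r) from by
          funext i; simp [hydef]]
        rw [norm_neg, pi_norm_const, Real.norm_eq_abs, abs_of_nonneg hr0.le]
      rw [hdyx, Real.dist_eq] at hKd
      have hu0y : u0 x - u0 y ≤ (K:ℝ) * r := by
        have := (abs_le.1 hKd).1
        linarith
      have hkey : ((K:ℝ)+1) * r < c * t^a * r^((d:ℝ)*a) := by
        have hBpos : (0:ℝ) < c * t^a / ((K:ℝ)+1) / 2 := by positivity
        have h1 : r ^ a ≤ A ^ a := Real.rpow_le_rpow hr0.le hrA ha0.le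
        have h2 : A ^ a = c * t^a / ((K:ℝ)+1) / 2 := by
          rw [hA, ← Real.rpow_mul hBpos.le, mul_inv_cancel₀ (by positivity), Real.rpow_one]
        have hrda0 : 0 < r ^ ((d:ℝ)*a) := Real.rpow_pos_of_pos hr0 _
        have hrsplit : r^((d:ℝ)*a) * r^a = r := by
          rw [← Real.rpow_add hr0, al_id, Real.rpow_one]
        have hK1 : (0:ℝ) < (K:ℝ)+1 := by positivity
        calc ((K:ℝ)+1) * r = ((K:ℝ)+1) * (r^((d:ℝ)*a) * r^a) := by rw [hrsplit]
          _ ≤ ((K:ℝ)+1) * (r^((d:ℝ)*a) * (c * t^a / ((K:ℝ)+1) / 2)) := by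
              rw [h2] at h1
              exact mul_le_mul_of_nonneg_left
                (mul_le_mul_of_nonneg_left h1 hrda0.le) hK1.le
          _ = c * t^a * r^((d:ℝ)*a) / 2 := by field_simp
          _ < c * t^a * r^((d:ℝ)*a) := by
              have : 0 < c * t^a * r^((d:ℝ)*a) := by positivity
              linarith
      have hph := phi_le_hlu hd hc hmono hdecay ht hyx
      rw [hphi] at hph
      have : 0 ≤ (K:ℝ) := K.coe_nonneg
      calc hlu c d u0 x s = u0 x := heq.symm
        _ < u0 y + c * (t^a * r^((d:ℝ)*a)) := by nlinarith
        _ ≤ hlu c d u0 x t := hph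
    · -- u(x,s) > u0 x
      set g := hlu c d u0 x s - u0 x with hg
      have hg0 : 0 < g := by simp only [hg]; linarith
      have hsa0 : 0 < s ^ a := Real.rpow_pos_of_pos hs _
      set θ := g / (2 * (c * s^a)) with hθ
      have hθ0 : 0 < θ := by positivity
      have hd0 : 0 < c * (t^a - s^a) * θ / 2 := by
        have : 0 < t^a - s^a := by linarith
        positivity
      set ε := min (g/2) (c * (t^a - s^a) * θ / 2) with hε
      have hε0 : 0 < ε := lt_min (by linarith) hd0
      obtain ⟨v, hv, hvlt⟩ := exists_lt_of_lt_csSup (hl_nonempty hd hs)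
        (show hlu c d u0 x s - ε < sSup (hlSet c d u0 x s) by
          rw [← hlu_eq hs]; linarith)
      rw [hlSet_eq hs] at hv
      obtain ⟨y, hy, rfl⟩ := hv
      have hPnn : 0 ≤ ∏ i, (x i - y i) := prod_nonneg_of_le hy
      set P := ∏ i, (x i - y i) with hPdef
      have hsplit : ∀ u : ℝ, 0 ≤ u → phi c d u0 x y u = u0 y + c * (u^a * P^a) :=
        fun u hu => by rw [phi, ← hPdef, Real.mul_rpow hu hPnn]
      replace hvlt : hlu c d u0 x s - ε < phi c d u0 x y s := hvlt
      rw [hsplit s hs.le] at hvlt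
      have hu0y : u0 y ≤ u0 x := hmono hy
      have hPa0 : 0 ≤ P ^ a := Real.rpow_nonneg hPnn _
      have hPθ : θ ≤ P^a := by
        have hεg : ε ≤ g/2 := min_le_left _ _
        have h1 : g/2 ≤ c * s^a * P^a := by
          simp only [hg] at *
          nlinarith
        rw [hθ, div_le_iff₀ (by positivity)]
        nlinarith
      have hphit := phi_le_hlu hd hc hmono hdecay ht hy
      rw [hsplit t ht.le] at hphit
      have hεd : ε ≤ c * (t^a - s^a) * θ / 2 := min_le_right _ _
      have hgain : c * (t^a - s^a) * θ ≤ c * (t^a - s^a) * P^a :=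
        mul_le_mul_of_nonneg_left hPθ (by nlinarith)
      calc hlu c d u0 x s < hlu c d u0 x s + c * (t^a - s^a) * θ / 2 := by linarith
        _ ≤ u0 y + c * (t^a * P^a) := by nlinarith
        _ ≤ hlu c d u0 x t := hphit
  have part4 : ∀ p : (Fin d → ℝ) × ℝ, 0 < p.2 → ∃ ε > 0, ∃ L : NNReal,
      LipschitzOnWith L (fun q : (Fin d → ℝ) × ℝ => hlu c d u0 q.1 q.2)
        (Metric.ball p ε ∩ {q : (Fin d → ℝ) × ℝ | 0 < q.2}) := by
    intro p hp
    obtain ⟨K₁, hK₁0, hK₁⟩ := lip_x hd hc hmono hlip hdecay p.1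
      (t₁ := p.2/2) (T₁ := p.2+1) (by linarith) (by linarith)
    obtain ⟨K₂, hK₂0, hK₂⟩ := lip_t hd hc hmono hdecay p.1
      (t₁ := p.2/2) (T₁ := p.2+1) (by linarith) (by linarith)
    refine ⟨min 1 (p.2/2), lt_min one_pos (by linarith), (K₁+K₂).toNNReal, ?_⟩
    refine LipschitzOnWith.of_dist_le_mul ?_
    intro q hq q' hq'
    have hfacts : ∀ w : (Fin d → ℝ) × ℝ, w ∈ ball p (min 1 (p.2/2)) ∩ {q | 0 < q.2} →
        ‖w.1 - p.1‖ ≤ 1 ∧ p.2/2 ≤ w.2 ∧ w.2 ≤ p.2+1 := by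
      rintro w ⟨hwb, -⟩
      rw [mem_ball, Prod.dist_eq] at hwb
      have h1 : dist w.1 p.1 < min 1 (p.2/2) := lt_of_le_of_lt (le_max_left _ _) hwb
      have h2 : dist w.2 p.2 < min 1 (p.2/2) := lt_of_le_of_lt (le_max_right _ _) hwb
      rw [dist_eq_norm] at h1
      rw [Real.dist_eq] at h2
      have h2' := abs_le.1 h2.le
      constructor
      · exact h1.le.trans (min_le_left _ _)
      constructor
      · have := (min_le_right 1 (p.2/2)); linarith [h2'.1]
      · have := (min_le_left 1 (p.2/2)); linarith [h2'.2]
    obtain ⟨hq1, hq2a, hq2b⟩ := hfacts q hq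
    obtain ⟨hq'1, hq'2a, hq'2b⟩ := hfacts q' hq'
    have hstep_x : |hlu c d u0 q.1 q.2 - hlu c d u0 q'.1 q.2| ≤ K₁ * dist q.1 q'.1 := by
      have h1 := hK₁ q'.1 q.1 hq'1 hq1 q.2 hq2a hq2b
      have h2 := hK₁ q.1 q'.1 hq1 hq'1 q.2 hq2a hq2b
      rw [abs_le]
      rw [dist_eq_norm]
      constructor
      · rw [show ‖q.1 - q'.1‖ = ‖q'.1 - q.1‖ from norm_sub_rev _ _]; linarith
      · linarith
    have hstep_t : |hlu c d u0 q'.1 q.2 - hlu c d u0 q'.1 q'.2| ≤ K₂ * dist q.2 q'.2 := by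
      rcases le_total q.2 q'.2 with hle | hle
      · have h1 := hK₂ q'.1 hq'1 q.2 q'.2 hq2a hle hq'2b
        have h2 := hlu_mono_t hd hc hmono hdecay q'.1 (by linarith : (0:ℝ) < q.2) hle
        have h3 : 0 ≤ K₂ * (q'.2 - q.2) := mul_nonneg hK₂0 (by linarith)
        rw [abs_le, Real.dist_eq, abs_of_nonpos (by linarith : q.2 - q'.2 ≤ 0)]
        constructor <;> linarith
      · have h1 := hK₂ q'.1 hq'1 q'.2 q.2 hq'2a hle hq2b
        have h2 := hlu_mono_t hd hc hmono hdecay q'.1 (by linarith : (0:ℝ) < q'.2) hle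
        have h3 : 0 ≤ K₂ * (q.2 - q'.2) := mul_nonneg hK₂0 (by linarith)
        rw [abs_le, Real.dist_eq, abs_of_nonneg (by linarith : 0 ≤ q.2 - q'.2)]
        constructor <;> linarith
    have hcoe : ((K₁+K₂).toNNReal : ℝ) = K₁ + K₂ := Real.coe_toNNReal _ (by linarith)
    rw [Real.dist_eq, hcoe]
    have hd1 : dist q.1 q'.1 ≤ dist q q' := by rw [Prod.dist_eq]; exact le_max_left _ _
    have hd2 : dist q.2 q'.2 ≤ dist q q' := by rw [Prod.dist_eq]; exact le_max_right _ _
    have htri : |hlu c d u0 q.1 q.2 - hlu c d u0 q'.1 q'.2| ≤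
        |hlu c d u0 q.1 q.2 - hlu c d u0 q'.1 q.2|
        + |hlu c d u0 q'.1 q.2 - hlu c d u0 q'.1 q'.2| := by
      have := abs_add_le (hlu c d u0 q.1 q.2 - hlu c d u0 q'.1 q.2)
        (hlu c d u0 q'.1 q.2 - hlu c d u0 q'.1 q'.2)
      simpa using this
    have hdn : 0 ≤ dist q q' := dist_nonneg
    calc |hlu c d u0 q.1 q.2 - hlu c d u0 q'.1 q'.2| ≤ _ + _ := htri
      _ ≤ K₁ * dist q.1 q'.1 + K₂ * dist q.2 q'.2 := add_le_add hstep_x hstep_t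
      _ ≤ K₁ * dist q q' + K₂ * dist q q' :=
          add_le_add (mul_le_mul_of_nonneg_left hd1 hK₁0) (mul_le_mul_of_nonneg_left hd2 hK₂0)
      _ = (K₁ + K₂) * dist q q' := by ring
  have hrp0 : ∀ D : ℝ, ContinuousAt (fun t:ℝ => c * (t*D) ^ a) 0 := by
    intro D
    have hb : ContinuousAt (fun t:ℝ => t*D) 0 := (continuous_id.mul continuous_const).continuousAt
    have hr : ContinuousAt (fun z:ℝ => z ^ a) ((0:ℝ) * D) := by
      rw [zero_mul]
      exact Real.continuousAt_rpow_const 0 a (Or.inr ha0.le)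
    exact continuousAt_const.mul
      (ContinuousAt.comp (g := fun z:ℝ => z ^ a) (f := fun t:ℝ => t*D) (x := (0:ℝ)) hr hb)
  have hrpval : ∀ D : ℝ, c * ((0:ℝ)*D) ^ a = 0 := by
    intro D
    rw [zero_mul, Real.zero_rpow (ne_of_gt ha0), mul_zero]
  have part6 : ∀ x : Fin d → ℝ,
      Tendsto (fun t => hlu c d u0 x t) (nhdsWithin 0 (Set.Ioi 0)) (nhds (u0 x)) := by
    intro x
    obtain ⟨D, hD, hbd⟩ := upper_near hd hc hmono hdecay x one_pos
    have hself : ‖x - x‖ ≤ 1 := by simp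
    have hupper : ∀ᶠ t in nhdsWithin (0:ℝ) (Set.Ioi 0),
        hlu c d u0 x t ≤ u0 x + c * (t*D) ^ a := by
      filter_upwards [Ioc_mem_nhdsGT_of_mem (by simp : (0:ℝ) ∈ Ico (0:ℝ) 1)]
      intro t htm
      exact hbd x hself t htm.1 htm.2
    have hlower : ∀ᶠ t in nhdsWithin (0:ℝ) (Set.Ioi 0), u0 x ≤ hlu c d u0 x t := by
      filter_upwards [self_mem_nhdsWithin]
      intro t htm
      exact le_hlu hd hc hmono hdecay htm
    have hlim : Tendsto (fun t:ℝ => u0 x + c * (t*D) ^ a)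
        (nhdsWithin (0:ℝ) (Set.Ioi 0)) (nhds (u0 x)) := by
      have h1 : Tendsto (fun t:ℝ => u0 x + c * (t*D) ^ a) (nhds 0)
          (nhds (u0 x + c * ((0:ℝ)*D) ^ a)) :=
        (continuousAt_const.add (hrp0 D)).tendsto
      rw [hrpval D, add_zero] at h1
      exact h1.mono_left nhdsWithin_le_nhds
    exact tendsto_of_tendsto_of_tendsto_of_le_of_le' tendsto_const_nhds hlim hlower hupper
  have part5 : ContinuousOn (fun q : (Fin d → ℝ) × ℝ => hlu c d u0 q.1 q.2)
      {q : (Fin d → ℝ) × ℝ | 0 ≤ q.2} := by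
    intro p hp
    have hp' : (0:ℝ) ≤ p.2 := hp
    rcases lt_or_eq_of_le hp' with hpos | hzero
    · obtain ⟨ε, hε, L, hL⟩ := part4 p hpos
      have hopen : IsOpen {q : (Fin d → ℝ) × ℝ | 0 < q.2} :=
        isOpen_lt continuous_const continuous_snd
      have hmem : ball p ε ∩ {q : (Fin d → ℝ) × ℝ | 0 < q.2} ∈ nhds p :=
        Filter.inter_mem (ball_mem_nhds p hε) (hopen.mem_nhds hpos)
      exact (hL.continuousOn.continuousAt hmem).continuousWithinAt
    · obtain ⟨D, hD, hbd⟩ := upper_near hd hc hmono hdecay p.1 one_pos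
      rw [Metric.continuousWithinAt_iff]
      intro ε hε
      have hu0c : ContinuousAt u0 p.1 := hlip.continuous.continuousAt
      obtain ⟨δ₁, hδ₁, hu0δ⟩ := Metric.continuousAt_iff.1 hu0c (ε/2) (by linarith)
      obtain ⟨δ₂, hδ₂, hrpδ⟩ := Metric.continuousAt_iff.1 (hrp0 D) (ε/2) (by linarith)
      refine ⟨min δ₁ (min 1 δ₂), by positivity, ?_⟩
      intro q hq hdist
      have hq2 : (0:ℝ) ≤ q.2 := hq
      have hd1 : dist q.1 p.1 < δ₁ := by
        rw [Prod.dist_eq] at hdist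
        exact lt_of_le_of_lt (le_max_left _ _) (lt_of_lt_of_le hdist (min_le_left _ _))
      have hd2 : dist q.2 p.2 < min 1 δ₂ := by
        rw [Prod.dist_eq] at hdist
        exact lt_of_le_of_lt (le_max_right _ _) (lt_of_lt_of_le hdist (min_le_right _ _))
      have hq2' : q.2 < min 1 δ₂ := by
        rw [Real.dist_eq, ← hzero, sub_zero, abs_of_nonneg hq2] at hd2
        exact hd2
      have hud : |u0 q.1 - u0 p.1| < ε/2 := by
        have := hu0δ hd1
        rwa [Real.dist_eq] at this
      have hfp : hlu c d u0 p.1 p.2 = u0 p.1 := by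
        rw [← hzero, hlu, if_pos rfl]
      rw [Real.dist_eq, hfp]
      rcases eq_or_lt_of_le hq2 with hq20 | hq2pos
      · rw [← hq20, hlu, if_pos rfl]
        linarith [abs_nonneg (u0 q.1 - u0 p.1)]
      · have hterm : c * (q.2 * D) ^ a < ε/2 := by
          have hdq : dist q.2 0 < δ₂ := by
            rw [Real.dist_eq, sub_zero, abs_of_nonneg hq2]
            exact lt_of_lt_of_le hq2' (min_le_right _ _)
          have := hrpδ hdq
          rw [Real.dist_eq, hrpval D, sub_zero] at this
          have hnn : 0 ≤ c * (q.2 * D) ^ a := by positivity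
          rwa [abs_of_nonneg hnn] at this
        have hx1 : ‖q.1 - p.1‖ ≤ 1 := by
          rw [Prod.dist_eq] at hdist
          have hlt := lt_of_le_of_lt (le_max_left _ _) hdist
          rw [dist_eq_norm] at hlt
          have h1' := min_le_left (1:ℝ) δ₂
          have h2' := min_le_right δ₁ (min 1 δ₂)
          linarith
        have hb1 := hbd q.1 hx1 q.2 hq2pos (le_of_lt (lt_of_lt_of_le hq2' (min_le_left _ _)))
        have hb2 := le_hlu hd hc hmono hdecay (x := q.1) hq2pos
        have habs := abs_sub_abs_le_abs_sub (u0 q.1) (u0 p.1)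
        rw [abs_lt] at hud ⊢
        constructor <;> linarith
      done
  exact ⟨part1, part2, part3, part4, part5, part6⟩

end
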